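/- Let ℙ be the unconstrained 0/1 polynomial optimization problem min{ f(x) : x ∈ {0,1}^n } for a multilinear polynomial f, and let f(x_{I*}) = min_{I⊆N} f(x_I) be its integral optimum. Then the level-(n−1) Lasserre relaxation Las_{n−1}(ℙ) has an integrality gap (i.e., there exists y : P(N) → ℝ with y_∅ = 1, M_{n−1}(y) positive semidefinite, and Σ_{I⊆N} f_I y_I < f(x_{I*})) if and only if there exists a family of reals {y_I^N : I ⊆ N} satisfying: (i) Σ_{I⊆N} y_I^N = 1; (ii) y_K^N < 0 for exactly one K ⊆ N; (iii) y_J^N > 0 for all J ⊆ N with J ≠ K; (iv) Σ_{I⊆N} 1/y_I^N ≤ 0; and (v) Σ_{I⊆N} y_I^N f(x_I) < f(x_{I*}). -/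

import Mathlib

open Finset Matrix

/-- The index set `P_{n-1}(N)`: all subsets of `N = {1,...,n}` except `N` itself. -/
abbrev Idx (n : ℕ) := {I : Finset (Fin n) // I ≠ Finset.univ}

/-- The `(n-1)`-moment matrix of `w`, with `(I,J)`-entry `w_{I ∪ J}`. -/
def Mnm1 {n : ℕ} (w : Finset (Fin n) → ℝ) : Matrix (Idx n) (Idx n) ℝ :=
  Matrix.of fun I J => w (I.1 ∪ J.1)

/-- Value of the multilinear polynomial with coefficients `c` at the 0/1 point `x_I`:
`f(x_I) = ∑_{S ⊆ I} c S`. -/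
def fval {n : ℕ} (c : Finset (Fin n) → ℝ) (I : Finset (Fin n)) : ℝ :=
  ∑ S ∈ I.powerset, c S

namespace GapAux

variable {n : ℕ}

/-- interval sum, exponent relative to bottom -/
lemma core (J T : Finset (Fin n)) (hJT : J ⊆ T) :
    ∑ S ∈ univ.filter (fun S => J ⊆ S ∧ S ⊆ T), (-1:ℝ)^((S\J).card) =
      if T = J then 1 else 0 := by
  have h1 : ∑ S ∈ univ.filter (fun S => J ⊆ S ∧ S ⊆ T), (-1:ℝ)^((S\J).card)
      = ∑ U ∈ (T \ J).powerset, (-1:ℝ)^U.card := by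
    refine Finset.sum_nbij' (fun S => S \ J) (fun U => U ∪ J) ?_ ?_ ?_ ?_ ?_
    · intro S hS
      simp only [mem_filter, mem_univ, true_and] at hS
      simp only [mem_powerset]
      exact sdiff_subset_sdiff hS.2 (Finset.Subset.refl J)
    · intro U hU
      simp only [mem_powerset] at hU
      simp only [mem_filter, mem_univ, true_and]
      constructor
      · exact subset_union_right
      · exact union_subset (hU.trans (sdiff_subset)) hJT
    · intro S hS
      simp only [mem_filter, mem_univ, true_and] at hS
      exact sdiff_union_of_subset hS.1
    · intro U hU
      simp only [mem_powerset] at hU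
      apply union_sdiff_cancel_right
      exact (Finset.disjoint_of_subset_left hU Finset.sdiff_disjoint)
    · intro S hS; rfl
  rw [h1]
  have := Finset.sum_powerset_neg_one_pow_card (x := T \ J)
  have h2 : ∑ U ∈ (T \ J).powerset, (-1:ℝ)^U.card
      = ((∑ U ∈ (T \ J).powerset, (-1:ℤ)^U.card : ℤ) : ℝ) := by
    push_cast; rfl
  rw [h2, this]
  by_cases h : T = J
  · subst h; simp
  · have hne : T \ J ≠ ∅ := fun he =>
      h (Finset.Subset.antisymm (Finset.sdiff_eq_empty_iff_subset.1 he) hJT)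
    simp [hne, h]

/-- interval sum, exponent relative to top -/
lemma core' (J T : Finset (Fin n)) (hJT : J ⊆ T) :
    ∑ S ∈ univ.filter (fun S => J ⊆ S ∧ S ⊆ T), (-1:ℝ)^((T\S).card) =
      if T = J then 1 else 0 := by
  have h1 : ∑ S ∈ univ.filter (fun S => J ⊆ S ∧ S ⊆ T), (-1:ℝ)^((T\S).card)
      = ∑ U ∈ (T \ J).powerset, (-1:ℝ)^U.card := by
    refine Finset.sum_nbij' (fun S => T \ S) (fun U => T \ U) ?_ ?_ ?_ ?_ ?_
    · intro S hS
      simp only [mem_filter, mem_univ, true_and] at hS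
      simp only [mem_powerset]
      exact sdiff_subset_sdiff (Finset.Subset.refl T) hS.1
    · intro U hU
      simp only [mem_powerset] at hU
      simp only [mem_filter, mem_univ, true_and]
      refine ⟨?_, sdiff_subset⟩
      intro a ha
      simp only [mem_sdiff]
      refine ⟨hJT ha, fun haU => ?_⟩
      have := hU haU
      simp only [mem_sdiff] at this
      exact this.2 ha
    · intro S hS
      simp only [mem_filter, mem_univ, true_and] at hS
      exact Finset.sdiff_sdiff_eq_self hS.2
    · intro U hU
      simp only [mem_powerset] at hU
      exact Finset.sdiff_sdiff_eq_self (hU.trans sdiff_subset)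
    · intro S hS; rfl
  rw [h1]
  have := Finset.sum_powerset_neg_one_pow_card (x := T \ J)
  have h2 : ∑ U ∈ (T \ J).powerset, (-1:ℝ)^U.card
      = ((∑ U ∈ (T \ J).powerset, (-1:ℤ)^U.card : ℤ) : ℝ) := by
    push_cast; rfl
  rw [h2, this]
  by_cases h : T = J
  · subst h; simp
  · have hne : T \ J ≠ ∅ := fun he =>
      h (Finset.Subset.antisymm (Finset.sdiff_eq_empty_iff_subset.1 he) hJT)
    simp [hne, h]

/-- The Möbius transform `Y_I = ∑_{S ⊇ I} (-1)^{|S \ I|} y_S`. -/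
def mob (y : Finset (Fin n) → ℝ) (I : Finset (Fin n)) : ℝ :=
  ∑ S ∈ univ.filter (fun S => I ⊆ S), (-1:ℝ)^((S\I).card) * y S

/-- Möbius inversion: `∑_{S ⊇ I} Y_S = y_I`. -/
lemma mob_inv (y : Finset (Fin n) → ℝ) (I : Finset (Fin n)) :
    y I = ∑ S : Finset (Fin n), (if I ⊆ S then mob y S else 0) := by
  have step1 : ∑ S : Finset (Fin n), (if I ⊆ S then mob y S else 0)
      = ∑ S : Finset (Fin n), ∑ T : Finset (Fin n),
          (if I ⊆ S ∧ S ⊆ T then (-1:ℝ)^((T\S).card) * y T else 0) := by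
    refine Finset.sum_congr rfl fun S _ => ?_
    by_cases h : I ⊆ S
    · simp only [h, if_true, mob, Finset.sum_filter, true_and]
    · simp [h]
  rw [step1, Finset.sum_comm]
  have step2 : ∀ T : Finset (Fin n),
      (∑ S : Finset (Fin n), if I ⊆ S ∧ S ⊆ T then (-1:ℝ)^((T\S).card) * y T else 0)
        = if T = I then y T else 0 := by
    intro T
    by_cases hIT : I ⊆ T
    · have h3 : (∑ S : Finset (Fin n), if I ⊆ S ∧ S ⊆ T then (-1:ℝ)^((T\S).card) * y T else 0)
          = (∑ S ∈ univ.filter (fun S => I ⊆ S ∧ S ⊆ T), (-1:ℝ)^((T\S).card)) * y T := by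
        rw [Finset.sum_filter, Finset.sum_mul]
        refine Finset.sum_congr rfl fun S _ => ?_
        by_cases h : I ⊆ S ∧ S ⊆ T <;> simp [h]
      rw [h3, core' I T hIT]
      by_cases h : T = I <;> simp [h]
    · have h0 : ∀ S : Finset (Fin n), ¬(I ⊆ S ∧ S ⊆ T) := fun S hc => hIT (hc.1.trans hc.2)
      have hTI : T ≠ I := fun h => hIT (h ▸ Finset.Subset.refl I)
      simp [h0, hTI]
  rw [Finset.sum_congr rfl fun T _ => step2 T]
  simp

/-- The linear functional `x ↦ v_S · x = ∑_{I ⊆ S, I ≠ N} x_I`. -/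
def eS (S : Finset (Fin n)) (x : Idx n → ℝ) : ℝ :=
  ∑ I : Idx n, if I.1 ⊆ S then x I else 0

/-- Quadratic-form identity for the moment matrix. -/
lemma quadform (Y y : Finset (Fin n) → ℝ)
    (hy : ∀ I, y I = ∑ S : Finset (Fin n), (if I ⊆ S then Y S else 0))
    (x : Idx n → ℝ) :
    x ⬝ᵥ (Mnm1 y) *ᵥ x = ∑ S : Finset (Fin n), Y S * (eS S x)^2 := by
  calc x ⬝ᵥ (Mnm1 y) *ᵥ x
      = ∑ I : Idx n, ∑ J : Idx n, x I * (y (I.1 ∪ J.1) * x J) := by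
        simp [dotProduct, Matrix.mulVec, Mnm1, Finset.mul_sum]
    _ = ∑ I : Idx n, ∑ J : Idx n, ∑ S : Finset (Fin n),
          (if I.1 ⊆ S then x I else 0) * Y S * (if J.1 ⊆ S then x J else 0) := by
        refine Finset.sum_congr rfl fun I _ => Finset.sum_congr rfl fun J _ => ?_
        rw [hy (I.1 ∪ J.1), Finset.sum_mul, Finset.mul_sum]
        refine Finset.sum_congr rfl fun S _ => ?_
        by_cases h1 : I.1 ⊆ S <;> by_cases h2 : J.1 ⊆ S <;>
          simp [h1, h2, Finset.union_subset_iff] <;> ring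
    _ = ∑ S : Finset (Fin n), ∑ I : Idx n, ∑ J : Idx n,
          (if I.1 ⊆ S then x I else 0) * Y S * (if J.1 ⊆ S then x J else 0) := by
        rw [Finset.sum_congr rfl fun (I : Idx n) _ => Finset.sum_comm, Finset.sum_comm]
    _ = ∑ S : Finset (Fin n), Y S * (eS S x)^2 := by
        refine Finset.sum_congr rfl fun S _ => ?_
        rw [pow_two, eS, Finset.sum_mul_sum, Finset.mul_sum]
        refine Finset.sum_congr rfl fun I _ => ?_
        rw [Finset.mul_sum]
        refine Finset.sum_congr rfl fun J _ => ?_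
        ring

lemma sum_up_sign (I : Finset (Fin n)) (hI : I ≠ univ) :
    ∑ S ∈ univ.filter (fun S => I ⊆ S), (-1:ℝ)^S.card = 0 := by
  have h : ∀ S ∈ univ.filter (fun S => I ⊆ S),
      (-1:ℝ)^S.card = (-1:ℝ)^I.card * (-1:ℝ)^((S\I).card) := by
    intro S hS
    simp only [mem_filter, mem_univ, true_and] at hS
    rw [← pow_add]
    congr 1
    have := Finset.card_sdiff_add_card_eq_card hS
    omega
  rw [Finset.sum_congr rfl h, ← Finset.mul_sum]
  have hf : univ.filter (fun S : Finset (Fin n) => I ⊆ S)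
      = univ.filter (fun S => I ⊆ S ∧ S ⊆ univ) := by
    apply Finset.filter_congr
    intro S _
    simp [Finset.subset_univ]
  rw [hf, core I univ (Finset.subset_univ I)]
  have : (univ : Finset (Fin n)) ≠ I := fun h => hI h.symm
  simp [this]

/-- The linear relation `∑_S (-1)^{|S|} (v_S · x) = 0`. -/
lemma relation (x : Idx n → ℝ) :
    ∑ S : Finset (Fin n), (-1:ℝ)^S.card * eS S x = 0 := by
  have h1 : ∑ S : Finset (Fin n), (-1:ℝ)^S.card * eS S x
      = ∑ I : Idx n, ∑ S : Finset (Fin n), (if I.1 ⊆ S then (-1:ℝ)^S.card * x I else 0) := by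
    rw [← Finset.sum_comm]
    refine Finset.sum_congr rfl fun S _ => ?_
    rw [eS, Finset.mul_sum]
    refine Finset.sum_congr rfl fun I _ => ?_
    by_cases h : I.1 ⊆ S <;> simp [h]
  rw [h1]
  refine Finset.sum_eq_zero fun I _ => ?_
  have h2 : ∑ S : Finset (Fin n), (if I.1 ⊆ S then (-1:ℝ)^S.card * x I else 0)
      = (∑ S ∈ univ.filter (fun S => I.1 ⊆ S), (-1:ℝ)^S.card) * x I := by
    rw [Finset.sum_filter, Finset.sum_mul]
    refine Finset.sum_congr rfl fun S _ => ?_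
    by_cases h : I.1 ⊆ S <;> simp [h]
  rw [h2, sum_up_sign I.1 I.2, zero_mul]

/-- Surjectivity of `x ↦ (v_S · x)_S` onto the hyperplane. -/
lemma exists_x (u : Finset (Fin n) → ℝ)
    (hu : ∑ S : Finset (Fin n), (-1:ℝ)^S.card * u S = 0) :
    ∃ x : Idx n → ℝ, ∀ S, eS S x = u S := by
  set x' : Finset (Fin n) → ℝ := fun I => ∑ J ∈ I.powerset, (-1:ℝ)^((I\J).card) * u J with hx'
  -- Möbius inversion: ∑_{I ⊆ S} x' I = u S for every S
  have moeb : ∀ S : Finset (Fin n), ∑ I ∈ S.powerset, x' I = u S := by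
    intro S
    have step1 : ∑ I ∈ S.powerset, x' I
        = ∑ I : Finset (Fin n), ∑ J : Finset (Fin n),
            (if J ⊆ I ∧ I ⊆ S then (-1:ℝ)^((I\J).card) * u J else 0) := by
      rw [← Finset.sum_filter_add_sum_filter_not univ (fun I => I ⊆ S)]
      have e2 : ∑ I ∈ univ.filter (fun I => ¬ I ⊆ S), ∑ J : Finset (Fin n),
          (if J ⊆ I ∧ I ⊆ S then (-1:ℝ)^((I\J).card) * u J else 0) = 0 := by
        refine Finset.sum_eq_zero fun I hI => Finset.sum_eq_zero fun J _ => ?_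
        simp only [mem_filter] at hI
        simp [hI.2]
      rw [e2, add_zero]
      have e3 : S.powerset = univ.filter (fun I => I ⊆ S) := by ext T; simp
      rw [← e3]
      refine Finset.sum_congr rfl fun I hI => ?_
      simp only [mem_powerset] at hI
      rw [hx']
      simp only
      have hps : I.powerset = univ.filter (fun J => J ⊆ I) := by ext T; simp
      rw [hps, Finset.sum_filter]
      refine Finset.sum_congr rfl fun J _ => ?_
      by_cases h : J ⊆ I <;> simp [h, hI]
    rw [step1, Finset.sum_comm]
    have step2 : ∀ J : Finset (Fin n),
        (∑ I : Finset (Fin n), if J ⊆ I ∧ I ⊆ S then (-1:ℝ)^((I\J).card) * u J else 0)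
          = if S = J then u J else 0 := by
      intro J
      by_cases hJS : J ⊆ S
      · have h3 : (∑ I : Finset (Fin n), if J ⊆ I ∧ I ⊆ S then (-1:ℝ)^((I\J).card) * u J else 0)
            = (∑ I ∈ univ.filter (fun I => J ⊆ I ∧ I ⊆ S), (-1:ℝ)^((I\J).card)) * u J := by
          rw [Finset.sum_filter, Finset.sum_mul]
          refine Finset.sum_congr rfl fun I _ => ?_
          by_cases h : J ⊆ I ∧ I ⊆ S <;> simp [h]
        rw [h3, core J S hJS]
        by_cases h : S = J <;> simp [h]
      · have h0 : ∀ I : Finset (Fin n), ¬(J ⊆ I ∧ I ⊆ S) := fun I hc => hJS (hc.1.trans hc.2)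
        have hSJ : S ≠ J := fun h => hJS (h ▸ Finset.Subset.refl J)
        simp [h0, hSJ]
    rw [Finset.sum_congr rfl fun J _ => step2 J]
    simp
  -- x' univ = 0 thanks to the linear relation hu
  have hxu : x' univ = 0 := by
    rw [hx']
    simp only
    have : ∀ J ∈ (univ : Finset (Fin n)).powerset,
        (-1:ℝ)^((univ\J).card) * u J = (-1:ℝ)^(univ : Finset (Fin n)).card * ((-1:ℝ)^J.card * u J) := by
      intro J hJ
      simp only [mem_powerset] at hJ
      rw [← mul_assoc, ← pow_add]
      congr 1
      have hc := Finset.card_sdiff_add_card_eq_card (Finset.subset_univ J)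
      have hpar : (univ \ J).card % 2 = ((univ : Finset (Fin n)).card + J.card) % 2 := by omega
      rcases Nat.even_or_odd ((univ \ J).card) with he | ho
      · have hb : Even ((univ : Finset (Fin n)).card + J.card) := by
          rw [Nat.even_iff] at he ⊢; omega
        rw [he.neg_one_pow, hb.neg_one_pow]
      · have hb : Odd ((univ : Finset (Fin n)).card + J.card) := by
          rw [Nat.odd_iff] at ho ⊢; omega
        rw [ho.neg_one_pow, hb.neg_one_pow]
    rw [Finset.sum_congr rfl this, ← Finset.mul_sum]
    have e4 : (univ : Finset (Fin n)).powerset = (univ : Finset (Finset (Fin n))) := by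
      ext T; simp
    rw [e4, hu, mul_zero]
  refine ⟨fun I => x' I.1, fun S => ?_⟩
  -- eS S x = ∑ over subsets of S except univ of x'
  have e5 : eS S (fun I => x' I.1)
      = ∑ I ∈ S.powerset.filter (fun I => I ≠ univ), x' I := by
    rw [eS]
    rw [← Finset.sum_subtype (univ.filter (fun I : Finset (Fin n) => I ≠ univ))
      (by intro I; simp) (fun I => if I ⊆ S then x' I else 0)]
    rw [Finset.sum_filter, ← Finset.sum_filter_add_sum_filter_not univ
      (fun I : Finset (Fin n) => I ∈ S.powerset.filter (fun I => I ≠ univ))]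
    have e6 : ∑ I ∈ univ.filter (fun I : Finset (Fin n) =>
        ¬ I ∈ S.powerset.filter (fun I => I ≠ univ)),
        (if I ≠ univ then (if I ⊆ S then x' I else 0) else 0) = 0 := by
      refine Finset.sum_eq_zero fun I hI => ?_
      simp only [mem_filter, mem_powerset, not_and] at hI
      by_cases h1 : I ≠ univ
      · by_cases h2 : I ⊆ S
        · exact absurd h1 (by simpa using hI.2 h2)
        · simp [h1, h2]
      · simp [h1]
    rw [e6, add_zero]
    refine (Finset.sum_congr ?_ fun I hI => ?_).symm
    · ext I; simp [and_comm]
    · simp only [mem_filter, mem_univ, true_and, mem_powerset] at hI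
      simp [hI.1, hI.2]
  rw [e5]
  by_cases hS : S = univ
  · subst hS
    have e7 : ∑ I ∈ univ.powerset.filter (fun I : Finset (Fin n) => I ≠ univ), x' I
        = (∑ I ∈ (univ : Finset (Fin n)).powerset, x' I) - x' univ := by
      rw [← Finset.sum_filter_add_sum_filter_not (univ : Finset (Fin n)).powerset
        (fun I => I ≠ univ) x']
      have e8 : (univ : Finset (Fin n)).powerset.filter (fun I => ¬ I ≠ univ) = {univ} := by
        ext T; simp
      rw [e8, Finset.sum_singleton]
      ring
    rw [e7, moeb, hxu, sub_zero]
  · have e9 : S.powerset.filter (fun I => I ≠ univ) = S.powerset := by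
      apply Finset.filter_true_of_mem
      intro I hI
      simp only [mem_powerset] at hI
      intro h
      exact hS (Finset.Subset.antisymm (Finset.subset_univ S) (h ▸ hI))
    rw [e9, moeb]


/-- Objective identity: `∑ c_I y_I = ∑ Y_S f(x_S)`. -/
lemma objective (cc Y y : Finset (Fin n) → ℝ)
    (hy : ∀ I, y I = ∑ S : Finset (Fin n), (if I ⊆ S then Y S else 0)) :
    ∑ I : Finset (Fin n), cc I * y I = ∑ S : Finset (Fin n), Y S * fval cc S := by
  calc ∑ I : Finset (Fin n), cc I * y I
      = ∑ I : Finset (Fin n), ∑ S : Finset (Fin n), (if I ⊆ S then cc I * Y S else 0) := by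
        refine Finset.sum_congr rfl fun I _ => ?_
        rw [hy, Finset.mul_sum]
        refine Finset.sum_congr rfl fun S _ => ?_
        by_cases h : I ⊆ S <;> simp [h]
    _ = ∑ S : Finset (Fin n), ∑ I : Finset (Fin n), (if I ⊆ S then cc I * Y S else 0) :=
        Finset.sum_comm
    _ = ∑ S : Finset (Fin n), Y S * fval cc S := by
        refine Finset.sum_congr rfl fun S _ => ?_
        rw [fval, Finset.mul_sum, ← Finset.sum_filter]
        have hps : univ.filter (fun I : Finset (Fin n) => I ⊆ S) = S.powerset := by
          ext T; simp
        rw [hps]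
        refine Finset.sum_congr rfl fun T _ => mul_comm _ _

/-- `y ∅ = ∑ Y_S`. -/
lemma y_empty (Y y : Finset (Fin n) → ℝ)
    (hy : ∀ I, y I = ∑ S : Finset (Fin n), (if I ⊆ S then Y S else 0)) :
    y ∅ = ∑ S : Finset (Fin n), Y S := by
  rw [hy]
  refine Finset.sum_congr rfl fun S _ => ?_
  simp

lemma herm (y : Finset (Fin n) → ℝ) : (Mnm1 y).IsHermitian := by
  ext I J
  simp [Mnm1, Matrix.conjTranspose_apply, Finset.union_comm]

/-- Key algebraic lemma: the quadratic form is nonnegative. -/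
lemma keyC {ι : Type*} [Fintype ι] [DecidableEq ι] (Y u ε : ι → ℝ)
    (hε : ∀ i, ε i * ε i = 1) (K : ι) (hK : Y K < 0)
    (hpos : ∀ J, J ≠ K → 0 < Y J)
    (hinv : ∑ i, 1 / Y i ≤ 0)
    (hne : ∃ j : ι, j ≠ K)
    (hrel : ∑ i, ε i * u i = 0) :
    0 ≤ ∑ i, Y i * (u i)^2 := by
  classical
  set s := (univ : Finset ι).erase K with hs
  obtain ⟨j, hj⟩ := hne
  have hsne : s.Nonempty := ⟨j, Finset.mem_erase.2 ⟨hj, Finset.mem_univ j⟩⟩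
  have hposs : ∀ i ∈ s, 0 < Y i := fun i hi => hpos i (Finset.mem_erase.1 hi).1
  set σ := ∑ i ∈ s, 1 / Y i with hσ
  have hσpos : 0 < σ :=
    Finset.sum_pos (fun i hi => div_pos one_pos (hposs i hi)) hsne
  have hsum1 : σ + 1 / Y K = ∑ i, 1 / Y i := by
    rw [hσ]; exact Finset.sum_erase_add univ _ (Finset.mem_univ K)
  have hσle : σ ≤ -(1 / Y K) := by linarith
  have hCS := Finset.sum_mul_sq_le_sq_mul_sq s
    (fun i => ε i * Real.sqrt (Y i)⁻¹) (fun i => Real.sqrt (Y i) * u i)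
  have hfg : ∑ i ∈ s, (ε i * Real.sqrt (Y i)⁻¹) * (Real.sqrt (Y i) * u i)
      = ∑ i ∈ s, ε i * u i := by
    refine Finset.sum_congr rfl fun i hi => ?_
    have h0 : (0:ℝ) < Y i := hposs i hi
    have hsq : Real.sqrt (Y i) ≠ 0 := ne_of_gt (Real.sqrt_pos.2 h0)
    calc (ε i * Real.sqrt (Y i)⁻¹) * (Real.sqrt (Y i) * u i)
        = ε i * u i * ((Real.sqrt (Y i))⁻¹ * Real.sqrt (Y i)) := by
          rw [Real.sqrt_inv]; ring
      _ = ε i * u i := by rw [inv_mul_cancel₀ hsq, mul_one]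
  have hf2 : ∑ i ∈ s, (ε i * Real.sqrt (Y i)⁻¹)^2 = σ := by
    rw [hσ]
    refine Finset.sum_congr rfl fun i hi => ?_
    have h0 : (0:ℝ) < Y i := hposs i hi
    have h1 : ε i ^ 2 = 1 := by rw [sq]; exact hε i
    rw [mul_pow, h1, one_mul, Real.sq_sqrt (le_of_lt (inv_pos.2 h0)), one_div]
  have hg2 : ∑ i ∈ s, (Real.sqrt (Y i) * u i)^2 = ∑ i ∈ s, Y i * u i ^ 2 := by
    refine Finset.sum_congr rfl fun i hi => ?_
    rw [mul_pow, Real.sq_sqrt (le_of_lt (hposs i hi))]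
  set T := ∑ i ∈ s, Y i * u i ^ 2 with hT
  have hTnn : 0 ≤ T :=
    Finset.sum_nonneg fun i hi => mul_nonneg (le_of_lt (hposs i hi)) (sq_nonneg _)
  have hsplit : ∑ i ∈ s, ε i * u i + ε K * u K = 0 := by
    rw [Finset.sum_erase_add univ _ (Finset.mem_univ K)]; exact hrel
  have hsq2 : (∑ i ∈ s, ε i * u i)^2 = u K ^ 2 := by
    have h2 : ∑ i ∈ s, ε i * u i = -(ε K * u K) := by linarith
    have h1 : ε K ^ 2 = 1 := by rw [sq]; exact hε K
    rw [h2, neg_pow, mul_pow, h1, one_mul]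
    simp
  have hCS' : u K ^ 2 ≤ σ * T := by
    rw [hfg, hf2, hg2] at hCS
    rw [← hsq2]
    exact hCS
  have htot : ∑ i, Y i * u i ^ 2 = T + Y K * u K ^ 2 := by
    rw [hT, hs]
    exact (Finset.sum_erase_add univ _ (Finset.mem_univ K)).symm
  rw [htot]
  have h1 : σ * (-Y K) ≤ 1 := by
    have hYK : (0:ℝ) < -Y K := neg_pos.2 hK
    have h2 := mul_le_mul_of_nonneg_right hσle (le_of_lt hYK)
    have hK0 : Y K ≠ 0 := ne_of_lt hK
    have h3 : -(1 / Y K) * (-Y K) = 1 := by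
      field_simp
    linarith
  nlinarith [mul_le_mul_of_nonneg_left hCS' (le_of_lt (neg_pos.2 hK)),
    mul_le_mul_of_nonneg_right h1 hTnn]

end GapAux

theorem unconstrained_gap_iff (n : ℕ) (hn : 1 ≤ n)
    (c : Finset (Fin n) → ℝ)
    (Istar : Finset (Fin n))
    (hIstar : ∀ I : Finset (Fin n), fval c Istar ≤ fval c I) :
    (∃ y : Finset (Fin n) → ℝ,
        y ∅ = 1 ∧
        (Mnm1 y).PosSemidef ∧
        (∑ I : Finset (Fin n), c I * y I) < fval c Istar)
      ↔ (∃ Y : Finset (Fin n) → ℝ,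
          (∑ I : Finset (Fin n), Y I = 1) ∧
          (∃ K : Finset (Fin n), Y K < 0 ∧
            ∀ J : Finset (Fin n), J ≠ K → 0 < Y J) ∧
          (∑ I : Finset (Fin n), 1 / Y I ≤ 0) ∧
          (∑ I : Finset (Fin n), Y I * fval c I) < fval c Istar) := by
  classical
  have hEU : (∅ : Finset (Fin n)) ≠ univ := by
    intro h
    have h2 : (univ : Finset (Fin n)).card = 0 := by rw [← h]; simp
    rw [Finset.card_univ, Fintype.card_fin] at h2
    omega
  have hexists_ne : ∀ K : Finset (Fin n), ∃ J : Finset (Fin n), J ≠ K := by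
    intro K
    by_cases h : K = ∅
    · exact ⟨univ, by rw [h]; exact fun hc => hEU hc.symm⟩
    · exact ⟨∅, fun hc => h hc.symm⟩
  set ε : Finset (Fin n) → ℝ := fun S => (-1:ℝ)^S.card with hε
  have hεsq : ∀ S : Finset (Fin n), ε S * ε S = 1 := by
    intro S
    rw [hε]
    simp only
    rw [← pow_add]
    exact Even.neg_one_pow ⟨S.card, rfl⟩
  constructor
  · -- forward direction
    rintro ⟨y, hy0, hPSD, hgap⟩
    set Y := GapAux.mob y with hY
    have hy : ∀ I, y I = ∑ S : Finset (Fin n), (if I ⊆ S then Y S else 0) :=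
      fun I => GapAux.mob_inv y I
    have hsum1 : ∑ S : Finset (Fin n), Y S = 1 := by
      rw [← GapAux.y_empty Y y hy, hy0]
    have hobj : ∑ I : Finset (Fin n), c I * y I
        = ∑ S : Finset (Fin n), Y S * fval c S := GapAux.objective c Y y hy
    have hgap' : ∑ S : Finset (Fin n), Y S * fval c S < fval c Istar := by
      rw [← hobj]; exact hgap
    -- quadratic form nonnegativity along the hyperplane
    have hq : ∀ u : Finset (Fin n) → ℝ,
        (∑ S : Finset (Fin n), ε S * u S = 0) →
        0 ≤ ∑ S : Finset (Fin n), Y S * (u S)^2 := by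
      intro u hu
      have hu' : ∑ S : Finset (Fin n), (-1:ℝ)^S.card * u S = 0 := hu
      obtain ⟨x, hx⟩ := GapAux.exists_x u hu'
      have h1 := hPSD.dotProduct_mulVec_nonneg x
      have hstar : star x = x := by ext i; simp
      rw [hstar, GapAux.quadform Y y hy x] at h1
      calc (0:ℝ) ≤ ∑ S : Finset (Fin n), Y S * (GapAux.eS S x)^2 := h1
        _ = ∑ S : Finset (Fin n), Y S * (u S)^2 := by
            refine Finset.sum_congr rfl fun S _ => ?_
            rw [hx S]
    -- there is a negative coordinate
    have hKex : ∃ K : Finset (Fin n), Y K < 0 := by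
      by_contra hcon
      push_neg at hcon
      have hge : fval c Istar ≤ ∑ S : Finset (Fin n), Y S * fval c S := by
        calc fval c Istar = (∑ S : Finset (Fin n), Y S) * fval c Istar := by
              rw [hsum1, one_mul]
          _ = ∑ S : Finset (Fin n), Y S * fval c Istar := by rw [Finset.sum_mul]
          _ ≤ ∑ S : Finset (Fin n), Y S * fval c S :=
              Finset.sum_le_sum fun S _ =>
                mul_le_mul_of_nonneg_left (hIstar S) (hcon S)
      linarith
    obtain ⟨K, hK⟩ := hKex
    -- all other coordinates are positive
    have hpos : ∀ J : Finset (Fin n), J ≠ K → 0 < Y J := by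
      intro J hJK
      set u : Finset (Fin n) → ℝ :=
        fun S => (if S = J then 1 else 0) + (if S = K then -(ε J * ε K) else 0) with hu
      have huJ : u J = 1 := by simp [hu, hJK]
      have huK : u K = -(ε J * ε K) := by simp [hu, Ne.symm hJK]
      have hu0 : ∀ S, S ≠ J → S ≠ K → u S = 0 := by
        intro S h1 h2; simp [hu, h1, h2]
      have hrel : ∑ S : Finset (Fin n), ε S * u S = 0 := by
        simp only [hu, mul_add, mul_ite, mul_one, mul_zero]
        rw [Finset.sum_add_distrib, Finset.sum_ite_eq', Finset.sum_ite_eq']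
        simp only [Finset.mem_univ, if_true]
        linear_combination (-(ε J)) * hεsq K
      have h0 := hq u hrel
      have hval : ∑ S : Finset (Fin n), Y S * (u S)^2 = Y J + Y K := by
        have hsub : ∑ S : Finset (Fin n), Y S * (u S)^2
            = ∑ S ∈ ({J, K} : Finset (Finset (Fin n))), Y S * (u S)^2 := by
          refine (Finset.sum_subset (Finset.subset_univ _) ?_).symm
          intro S _ hS
          simp only [Finset.mem_insert, Finset.mem_singleton] at hS
          push_neg at hS
          rw [hu0 S hS.1 hS.2]
          simp
        rw [hsub, Finset.sum_pair hJK, huJ, huK]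
        have h2 : (-(ε J * ε K))^2 = 1 := by
          rw [neg_sq]
          have h3 : (ε J * ε K)^2 = (ε J * ε J) * (ε K * ε K) := by ring
          rw [h3, hεsq J, hεsq K, one_mul]
        rw [h2]
        ring
      rw [hval] at h0
      linarith
    -- the inverse-sum inequality
    have hinv : ∑ S : Finset (Fin n), 1 / Y S ≤ 0 := by
      set s := (univ : Finset (Finset (Fin n))).erase K with hs
      obtain ⟨J0, hJ0⟩ := hexists_ne K
      have hsne : s.Nonempty := ⟨J0, Finset.mem_erase.2 ⟨hJ0, Finset.mem_univ J0⟩⟩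
      set σ := ∑ S ∈ s, 1 / Y S with hσ
      have hσpos : 0 < σ :=
        Finset.sum_pos
          (fun S hS => div_pos one_pos (hpos S (Finset.mem_erase.1 hS).1)) hsne
      set u : Finset (Fin n) → ℝ :=
        fun S => if S = K then ε K * (-σ) else ε S / Y S with hu
      have hrel : ∑ S : Finset (Fin n), ε S * u S = 0 := by
        rw [← Finset.sum_erase_add univ _ (Finset.mem_univ K)]
        have h1 : ∑ S ∈ univ.erase K, ε S * u S = σ := by
          rw [hσ]
          refine Finset.sum_congr rfl fun S hS => ?_
          have hSK : S ≠ K := (Finset.mem_erase.1 hS).1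
          rw [hu]
          simp only [hSK, if_false]
          rw [mul_div_assoc', hεsq S]
        have hKu : u K = ε K * -σ := by
          show (if K = K then ε K * -σ else ε K / Y K) = ε K * -σ
          exact if_pos rfl
        have h2 : ε K * u K = -σ := by
          rw [hKu, ← mul_assoc, hεsq K, one_mul]
        rw [h1, h2]
        ring
      have h0 := hq u hrel
      have hval : ∑ S : Finset (Fin n), Y S * (u S)^2 = σ + Y K * σ^2 := by
        rw [← Finset.sum_erase_add univ _ (Finset.mem_univ K)]
        have h1 : ∑ S ∈ univ.erase K, Y S * (u S)^2 = σ := by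
          rw [hσ]
          refine Finset.sum_congr rfl fun S hS => ?_
          have hSK : S ≠ K := (Finset.mem_erase.1 hS).1
          have hYS : (0:ℝ) < Y S := hpos S hSK
          rw [hu]
          simp only [hSK, if_false]
          rw [div_pow]
          have hε2 : (ε S)^2 = 1 := by rw [sq]; exact hεsq S
          rw [hε2]
          field_simp
        have hKu : u K = ε K * -σ := by
          show (if K = K then ε K * -σ else ε K / Y K) = ε K * -σ
          exact if_pos rfl
        have h2 : Y K * (u K)^2 = Y K * σ^2 := by
          have hε2 : (ε K)^2 = 1 := by rw [sq]; exact hεsq K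
          rw [hKu, mul_pow, hε2, one_mul, neg_sq]
        rw [h1, h2]
      rw [hval] at h0
      have h1 : 0 ≤ 1 + Y K * σ := by nlinarith
      have hsum : ∑ S : Finset (Fin n), 1 / Y S = σ + 1 / Y K := by
        rw [← Finset.sum_erase_add univ _ (Finset.mem_univ K)]
      rw [hsum]
      have hYK0 : Y K ≠ 0 := ne_of_lt hK
      have hYK1 : Y K * (1 / Y K) = 1 := by field_simp
      nlinarith [neg_pos.2 hK]
    exact ⟨Y, hsum1, ⟨K, hK, hpos⟩, hinv, hgap'⟩
  · -- reverse direction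
    rintro ⟨Y, hsum1, ⟨K, hK, hpos⟩, hinv, hgap⟩
    set y : Finset (Fin n) → ℝ :=
      fun I => ∑ S : Finset (Fin n), (if I ⊆ S then Y S else 0) with hydef
    have hy : ∀ I, y I = ∑ S : Finset (Fin n), (if I ⊆ S then Y S else 0) := fun I => rfl
    refine ⟨y, ?_, ?_, ?_⟩
    · rw [GapAux.y_empty Y y hy, hsum1]
    · refine Matrix.PosSemidef.of_dotProduct_mulVec_nonneg (GapAux.herm y) fun x => ?_
      have hstar : star x = x := by ext i; simp
      rw [hstar, GapAux.quadform Y y hy x]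
      exact GapAux.keyC Y (fun S => GapAux.eS S x) ε hεsq K hK hpos hinv
        (hexists_ne K) (GapAux.relation x)
    · rw [GapAux.objective c Y y hy]
      exact hgap
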